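/- Let Φ(x,y) = Σₙ φₙ(x)ψₙ(y) where φₙ, ψₙ : ℝ → ℂ satisfy Σₙ |φₙ|² ≤ C₁ and Σₙ |ψₙ|² ≤ C₂ pointwise. Then for any matrix A = (a(x,y)) indexed by countable subsets S ⊆ ℝ, T ⊆ ℝ that induces a bounded operator ℓ²(T) → ℓ²(S) of norm ‖A‖, the Schur product matrix (Φ(s,t)·a(s,t)) induces a bounded operator ℓ²(T) → ℓ²(S) of norm at most √(C₁C₂)·‖A‖. -/

import Mathlib

lemma two_toReal : (2 : ENNReal).toReal = 2 := by norm_num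

lemma rpow_two_eq (x : ℝ) : x ^ ((2 : ENNReal).toReal) = x ^ 2 := by
  rw [two_toReal, ← Real.rpow_natCast x 2]; norm_num

lemma memlp2 {α : Type*} {f : α → ℂ} (h : Summable fun i => ‖f i‖ ^ 2) :
    Memℓp f 2 := by
  apply memℓp_gen
  convert h using 2 with i
  exact rpow_two_eq _

lemma lp2_summable {α : Type*} (f : lp (fun _ : α => ℂ) 2) :
    Summable fun i => ‖f i‖ ^ 2 := by
  have := (lp.memℓp f).summable (p := 2) (by norm_num)
  convert this using 2 with i
  exact (rpow_two_eq _).symm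

lemma lp2_norm_sq {α : Type*} (f : lp (fun _ : α => ℂ) 2) :
    ‖f‖ ^ 2 = ∑' i, ‖f i‖ ^ 2 := by
  have h := lp.norm_rpow_eq_tsum (p := 2) (E := fun _ : α => ℂ) (by norm_num) f
  rw [rpow_two_eq _] at h
  rw [h]
  exact tsum_congr fun i => rpow_two_eq _

lemma lp2_norm_le {α : Type*} (f : lp (fun _ : α => ℂ) 2) {C : ℝ} (hC : 0 ≤ C)
    (h : ∑' i, ‖f i‖ ^ 2 ≤ C ^ 2) : ‖f‖ ≤ C := by
  apply lp.norm_le_of_tsum_le (by norm_num : 0 < (2:ENNReal).toReal) hC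
  rw [rpow_two_eq _]
  refine le_trans (le_of_eq ?_) h
  exact tsum_congr fun i => rpow_two_eq _

lemma myCS_summable {ι : Type*} {u v : ι → ℝ}
    (hu0 : ∀ i, 0 ≤ u i) (hv0 : ∀ i, 0 ≤ v i)
    (hu : Summable fun i => u i ^ 2) (hv : Summable fun i => v i ^ 2) :
    Summable fun i => u i * v i := by
  refine Summable.of_nonneg_of_le (fun i => mul_nonneg (hu0 i) (hv0 i))
    (fun i => ?_) ((hu.add hv).div_const 2)
  have := two_mul_le_add_sq (u i) (v i)
  nlinarith [sq_nonneg (u i), sq_nonneg (v i)]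

lemma myCS_bound {ι : Type*} {u v : ι → ℝ}
    (hu0 : ∀ i, 0 ≤ u i) (hv0 : ∀ i, 0 ≤ v i)
    (hu : Summable fun i => u i ^ 2) (hv : Summable fun i => v i ^ 2) :
    ∑' i, u i * v i ≤ Real.sqrt (∑' i, u i ^ 2) * Real.sqrt (∑' i, v i ^ 2) := by
  refine Summable.tsum_le_of_sum_le (myCS_summable hu0 hv0 hu hv) fun s => ?_
  have h1 : (∑ i ∈ s, u i * v i) ^ 2 ≤ (∑ i ∈ s, u i ^ 2) * ∑ i ∈ s, v i ^ 2 :=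
    Finset.sum_mul_sq_le_sq_mul_sq s u v
  have hnn : 0 ≤ ∑ i ∈ s, u i * v i :=
    Finset.sum_nonneg fun i _ => mul_nonneg (hu0 i) (hv0 i)
  have h2 : ∑ i ∈ s, u i * v i ≤
      Real.sqrt (∑ i ∈ s, u i ^ 2) * Real.sqrt (∑ i ∈ s, v i ^ 2) := by
    rw [← Real.sqrt_mul (Finset.sum_nonneg fun i _ => sq_nonneg _)]
    rw [show ∑ i ∈ s, u i * v i = Real.sqrt ((∑ i ∈ s, u i * v i) ^ 2) from
      (Real.sqrt_sq hnn).symm]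
    exact Real.sqrt_le_sqrt h1
  refine h2.trans ?_
  have a1 := Real.sqrt_le_sqrt (hu.sum_le_tsum s (fun i _ => sq_nonneg (u i)))
  have a2 := Real.sqrt_le_sqrt (hv.sum_le_tsum s (fun i _ => sq_nonneg (v i)))
  exact mul_le_mul a1 a2 (Real.sqrt_nonneg _) (Real.sqrt_nonneg _)

theorem stmt2 (S T : Set ℝ) (hS : S.Countable) (hT : T.Countable)
    (φ ψ : ℕ → ℝ → ℂ) (C₁ C₂ : ℝ) (hC₁ : 0 ≤ C₁) (hC₂ : 0 ≤ C₂)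
    (hφs : ∀ x : ℝ, Summable fun n => ‖φ n x‖ ^ 2)
    (hφ : ∀ x : ℝ, ∑' n, ‖φ n x‖ ^ 2 ≤ C₁)
    (hψs : ∀ y : ℝ, Summable fun n => ‖ψ n y‖ ^ 2)
    (hψ : ∀ y : ℝ, ∑' n, ‖ψ n y‖ ^ 2 ≤ C₂)
    (Φ : ℝ → ℝ → ℂ) (hΦ : ∀ x y : ℝ, Φ x y = ∑' n, φ n x * ψ n y)
    (a : S → T → ℂ)
    (A : lp (fun _ : T => ℂ) 2 →L[ℂ] lp (fun _ : S => ℂ) 2)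
    (hA : ∀ (f : lp (fun _ : T => ℂ) 2) (s : S), A f s = ∑' t : T, a s t * f t) :
    ∃ B : lp (fun _ : T => ℂ) 2 →L[ℂ] lp (fun _ : S => ℂ) 2,
      (∀ (f : lp (fun _ : T => ℂ) 2) (s : S),
        B f s = ∑' t : T, Φ (s : ℝ) (t : ℝ) * a s t * f t) ∧
      ‖B‖ ≤ Real.sqrt (C₁ * C₂) * ‖A‖ := by
  classical
  -- pointwise bounds
  have hφsq : ∀ n (x : ℝ), ‖φ n x‖ ^ 2 ≤ C₁ := fun n x =>
    le_trans ((hφs x).le_tsum n fun m _ => sq_nonneg _) (hφ x)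
  have hψsq : ∀ n (y : ℝ), ‖ψ n y‖ ^ 2 ≤ C₂ := fun n y =>
    le_trans ((hψs y).le_tsum n fun m _ => sq_nonneg _) (hψ y)
  -- Step A : rows of a are ℓ²
  have hrowkey : ∀ (s : S) (F : Finset T), ∑ t ∈ F, ‖a s t‖ ^ 2 ≤ ‖A‖ ^ 2 := by
    intro s F
    set g : T → ℂ := fun t => if t ∈ F then (starRingEnd ℂ) (a s t) else 0 with hgdef
    have hgmem : Memℓp g 2 := by
      apply memlp2
      apply summable_of_ne_finset_zero (s := F)
      intro t ht
      simp [g, ht]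
    set f0 : lp (fun _ : T => ℂ) 2 := ⟨g, hgmem⟩ with hf0def
    have hf0app : ∀ t, f0 t = g t := fun t => rfl
    set r : ℝ := ∑ t ∈ F, ‖a s t‖ ^ 2 with hrdef
    have hr0 : 0 ≤ r := Finset.sum_nonneg fun t _ => sq_nonneg _
    have hval : A f0 s = (r : ℂ) := by
      rw [hA f0 s]
      rw [tsum_eq_sum (s := F) (fun t ht => by simp [hf0app, g, ht])]
      rw [hrdef]
      push_cast
      refine Finset.sum_congr rfl fun t ht => ?_
      simp only [hf0app, hgdef, ht, if_true]
      rw [Complex.mul_conj]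
      norm_cast
      simp [Complex.normSq_eq_norm_sq]
    have hnormf0 : ‖f0‖ ≤ Real.sqrt r := by
      apply lp2_norm_le _ (Real.sqrt_nonneg _)
      rw [Real.sq_sqrt hr0]
      rw [tsum_eq_sum (s := F) (fun t ht => by simp [hf0app, g, ht])]
      refine le_of_eq (Finset.sum_congr rfl fun t ht => ?_)
      simp [hf0app, hgdef, ht]
    have hr_le : r ≤ ‖A‖ * Real.sqrt r := by
      have h1 : ‖A f0 s‖ = r := by rw [hval]; simp [abs_of_nonneg hr0]
      have h2 : ‖A f0 s‖ ≤ ‖A f0‖ :=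
        lp.norm_apply_le_norm (by norm_num) (A f0) s
      have h3 : ‖A f0‖ ≤ ‖A‖ * ‖f0‖ := A.le_opNorm f0
      calc r = ‖A f0 s‖ := h1.symm
        _ ≤ ‖A‖ * ‖f0‖ := h2.trans h3
        _ ≤ ‖A‖ * Real.sqrt r := by
            exact mul_le_mul_of_nonneg_left hnormf0 (norm_nonneg A)
    have hsq : Real.sqrt r ^ 2 = r := Real.sq_sqrt hr0
    nlinarith [Real.sqrt_nonneg r, norm_nonneg A, sq_nonneg (‖A‖ - Real.sqrt r)]
  have hrowS : ∀ s : S, Summable fun t : T => ‖a s t‖ ^ 2 := fun s =>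
    summable_of_sum_le (fun t => sq_nonneg _) (hrowkey s)
  have hrowB : ∀ s : S, ∑' t : T, ‖a s t‖ ^ 2 ≤ ‖A‖ ^ 2 := fun s =>
    Summable.tsum_le_of_sum_le (hrowS s) (hrowkey s)
  -- Step B : multiplication by ψ n
  have hmemψ : ∀ (n : ℕ) (f : lp (fun _ : T => ℂ) 2),
      Memℓp (fun t : T => ψ n t * f t) 2 := by
    intro n f
    apply memlp2
    refine Summable.of_nonneg_of_le (fun t => sq_nonneg _) (fun t => ?_)
      ((lp2_summable f).mul_left C₂)
    rw [norm_mul, mul_pow]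
    exact mul_le_mul_of_nonneg_right (hψsq n t) (sq_nonneg _)
  let mψ : ℕ → lp (fun _ : T => ℂ) 2 → lp (fun _ : T => ℂ) 2 :=
    fun n f => ⟨fun t => ψ n t * f t, hmemψ n f⟩
  have hmψ : ∀ n f (t : T), (mψ n f) t = ψ n t * f t := fun _ _ _ => rfl
  have hB1 : ∀ f : lp (fun _ : T => ℂ) 2,
      (Summable fun n => ‖mψ n f‖ ^ 2) ∧ ∑' n, ‖mψ n f‖ ^ 2 ≤ C₂ * ‖f‖ ^ 2 := by
    intro f
    have hterm : ∀ n, ‖mψ n f‖ ^ 2 = ∑' t : T, ‖ψ n t * f t‖ ^ 2 := fun n =>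
      lp2_norm_sq (mψ n f)
    have hsumt : ∀ n, Summable fun t : T => ‖ψ n t * f t‖ ^ 2 := fun n =>
      lp2_summable (mψ n f)
    have key : ∀ N : Finset ℕ, ∑ n ∈ N, ‖mψ n f‖ ^ 2 ≤ C₂ * ‖f‖ ^ 2 := by
      intro N
      have e1 : ∑ n ∈ N, ‖mψ n f‖ ^ 2 = ∑' t : T, ∑ n ∈ N, ‖ψ n t * f t‖ ^ 2 := by
        rw [Finset.sum_congr rfl fun n _ => hterm n]
        exact (Summable.tsum_finsetSum fun n _ => hsumt n).symm
      rw [e1]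
      have e2 : ∀ t : T, ∑ n ∈ N, ‖ψ n t * f t‖ ^ 2 ≤ C₂ * ‖f t‖ ^ 2 := by
        intro t
        have : ∑ n ∈ N, ‖ψ n t * f t‖ ^ 2 = (∑ n ∈ N, ‖ψ n (t:ℝ)‖ ^ 2) * ‖f t‖ ^ 2 := by
          rw [Finset.sum_mul]
          exact Finset.sum_congr rfl fun n _ => by rw [norm_mul, mul_pow]
        rw [this]
        refine mul_le_mul_of_nonneg_right ?_ (sq_nonneg _)
        exact ((hψs t).sum_le_tsum N (fun n _ => sq_nonneg _)).trans (hψ t)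
      calc ∑' t : T, ∑ n ∈ N, ‖ψ n t * f t‖ ^ 2
          ≤ ∑' t : T, C₂ * ‖f t‖ ^ 2 :=
            Summable.tsum_le_tsum e2 (summable_sum fun n _ => hsumt n)
              ((lp2_summable f).mul_left C₂)
        _ = C₂ * ∑' t : T, ‖f t‖ ^ 2 := tsum_mul_left
        _ = C₂ * ‖f‖ ^ 2 := by rw [← lp2_norm_sq]
    exact ⟨summable_of_sum_le (fun n => sq_nonneg _) key,
      Summable.tsum_le_of_sum_le (summable_of_sum_le (fun n => sq_nonneg _) key) key⟩
  -- Step C : sum over n of ‖A (mψ n f)‖²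
  have hGsq : ∀ f : lp (fun _ : T => ℂ) 2,
      (Summable fun n => ‖A (mψ n f)‖ ^ 2) ∧
        ∑' n, ‖A (mψ n f)‖ ^ 2 ≤ C₂ * ‖A‖ ^ 2 * ‖f‖ ^ 2 := by
    intro f
    have hb : ∀ n, ‖A (mψ n f)‖ ^ 2 ≤ ‖A‖ ^ 2 * ‖mψ n f‖ ^ 2 := fun n => by
      rw [← mul_pow]; exact pow_le_pow_left₀ (norm_nonneg _) (A.le_opNorm _) 2
    have hsum : Summable fun n => ‖A (mψ n f)‖ ^ 2 :=
      Summable.of_nonneg_of_le (fun n => sq_nonneg _) hb ((hB1 f).1.mul_left (‖A‖ ^ 2))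
    refine ⟨hsum, ?_⟩
    calc ∑' n, ‖A (mψ n f)‖ ^ 2 ≤ ∑' n, ‖A‖ ^ 2 * ‖mψ n f‖ ^ 2 :=
          Summable.tsum_le_tsum hb hsum ((hB1 f).1.mul_left _)
      _ = ‖A‖ ^ 2 * ∑' n, ‖mψ n f‖ ^ 2 := tsum_mul_left
      _ ≤ ‖A‖ ^ 2 * (C₂ * ‖f‖ ^ 2) :=
          mul_le_mul_of_nonneg_left (hB1 f).2 (sq_nonneg _)
      _ = C₂ * ‖A‖ ^ 2 * ‖f‖ ^ 2 := by ring
  -- Step D : pointwise sums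
  have hGs : ∀ (f : lp (fun _ : T => ℂ) 2) (s : S),
      Summable fun n => ‖A (mψ n f) s‖ ^ 2 := fun f s =>
    Summable.of_nonneg_of_le (fun n => sq_nonneg _)
      (fun n => pow_le_pow_left₀ (norm_nonneg _)
        (lp.norm_apply_le_norm (by norm_num) (A (mψ n f)) s) 2)
      (hGsq f).1
  have hφGnorm : ∀ (f : lp (fun _ : T => ℂ) 2) (s : S),
      Summable fun n => ‖φ n (s : ℝ) * A (mψ n f) s‖ := by
    intro f s
    have := myCS_summable (fun n => norm_nonneg (φ n (s : ℝ)))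
      (fun n => norm_nonneg (A (mψ n f) s)) (hφs s) (hGs f s)
    refine this.congr fun n => ?_
    exact (norm_mul _ _).symm
  have hφG : ∀ (f : lp (fun _ : T => ℂ) 2) (s : S),
      Summable fun n => φ n (s : ℝ) * A (mψ n f) s := fun f s =>
    Summable.of_norm (hφGnorm f s)
  set h : lp (fun _ : T => ℂ) 2 → S → ℂ :=
    fun f s => ∑' n, φ n (s : ℝ) * A (mψ n f) s with hhdef
  have hbound_pt : ∀ (f : lp (fun _ : T => ℂ) 2) (s : S),
      ‖h f s‖ ^ 2 ≤ C₁ * ∑' n, ‖A (mψ n f) s‖ ^ 2 := by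
    intro f s
    set X : ℝ := ∑' n, ‖A (mψ n f) s‖ ^ 2 with hXdef
    have hXnn : 0 ≤ X := tsum_nonneg fun n => sq_nonneg _
    have h1 : ‖h f s‖ ≤ ∑' n, ‖φ n (s : ℝ)‖ * ‖A (mψ n f) s‖ := by
      refine le_trans (norm_tsum_le_tsum_norm (hφGnorm f s)) (le_of_eq ?_)
      exact tsum_congr fun n => norm_mul _ _
    have h2 : ∑' n, ‖φ n (s : ℝ)‖ * ‖A (mψ n f) s‖ ≤
        Real.sqrt C₁ * Real.sqrt X := by
      refine (myCS_bound (fun n => norm_nonneg _) (fun n => norm_nonneg _)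
        (hφs s) (hGs f s)).trans ?_
      exact mul_le_mul_of_nonneg_right (Real.sqrt_le_sqrt (hφ s)) (Real.sqrt_nonneg _)
    calc ‖h f s‖ ^ 2 ≤ (Real.sqrt C₁ * Real.sqrt X) ^ 2 :=
          pow_le_pow_left₀ (norm_nonneg _) (h1.trans h2) 2
      _ = C₁ * X := by rw [mul_pow, Real.sq_sqrt hC₁, Real.sq_sqrt hXnn]
  -- Step E : h f is ℓ² with good bound
  have hEkey : ∀ (f : lp (fun _ : T => ℂ) 2) (K : Finset S),
      ∑ s ∈ K, ‖h f s‖ ^ 2 ≤ C₁ * C₂ * ‖A‖ ^ 2 * ‖f‖ ^ 2 := by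
    intro f K
    have step1 : ∑ s ∈ K, ‖h f s‖ ^ 2 ≤ C₁ * ∑ s ∈ K, ∑' n, ‖A (mψ n f) s‖ ^ 2 := by
      rw [Finset.mul_sum]
      exact Finset.sum_le_sum fun s _ => hbound_pt f s
    have step2 : ∑ s ∈ K, ∑' n, ‖A (mψ n f) s‖ ^ 2 =
        ∑' n, ∑ s ∈ K, ‖A (mψ n f) s‖ ^ 2 :=
      (Summable.tsum_finsetSum fun s _ => hGs f s).symm
    have step3 : ∑' n, ∑ s ∈ K, ‖A (mψ n f) s‖ ^ 2 ≤ ∑' n, ‖A (mψ n f)‖ ^ 2 := by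
      refine Summable.tsum_le_tsum (fun n => ?_) ?_ (hGsq f).1
      · rw [lp2_norm_sq (A (mψ n f))]
        exact (lp2_summable (A (mψ n f))).sum_le_tsum K (fun s _ => sq_nonneg _)
      · refine Summable.of_nonneg_of_le
          (fun n => Finset.sum_nonneg fun s _ => sq_nonneg _) (fun n => ?_) (hGsq f).1
        rw [lp2_norm_sq (A (mψ n f))]
        exact (lp2_summable (A (mψ n f))).sum_le_tsum K (fun s _ => sq_nonneg _)
    calc ∑ s ∈ K, ‖h f s‖ ^ 2 ≤ C₁ * ∑ s ∈ K, ∑' n, ‖A (mψ n f) s‖ ^ 2 := step1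
      _ = C₁ * ∑' n, ∑ s ∈ K, ‖A (mψ n f) s‖ ^ 2 := by rw [step2]
      _ ≤ C₁ * ∑' n, ‖A (mψ n f)‖ ^ 2 := mul_le_mul_of_nonneg_left step3 hC₁
      _ ≤ C₁ * (C₂ * ‖A‖ ^ 2 * ‖f‖ ^ 2) := mul_le_mul_of_nonneg_left (hGsq f).2 hC₁
      _ = C₁ * C₂ * ‖A‖ ^ 2 * ‖f‖ ^ 2 := by ring
  have hhmem : ∀ f : lp (fun _ : T => ℂ) 2, Memℓp (h f) 2 := fun f =>
    memlp2 (summable_of_sum_le (fun s => sq_nonneg _) (hEkey f))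
  -- Step F : linearity
  have hmψadd : ∀ n (f g : lp (fun _ : T => ℂ) 2), mψ n (f + g) = mψ n f + mψ n g := by
    intro n f g
    apply Subtype.ext
    funext t
    have : (↑(f + g) : T → ℂ) t = f t + g t := by rw [lp.coeFn_add]; rfl
    show ψ n t * (↑(f + g) : T → ℂ) t = _
    rw [this, mul_add]
    rfl
  have hmψsmul : ∀ n (c : ℂ) (f : lp (fun _ : T => ℂ) 2), mψ n (c • f) = c • mψ n f := by
    intro n c f
    apply Subtype.ext
    funext t
    have : (↑(c • f) : T → ℂ) t = c * f t := by rw [lp.coeFn_smul]; rfl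
    show ψ n t * (↑(c • f) : T → ℂ) t = _
    rw [this]
    have : (↑(c • mψ n f) : T → ℂ) t = c * (ψ n t * f t) := by rw [lp.coeFn_smul]; rfl
    rw [this]
    ring
  have hhadd : ∀ (f g : lp (fun _ : T => ℂ) 2) (s : S),
      h (f + g) s = h f s + h g s := by
    intro f g s
    have e : ∀ n : ℕ, φ n (s : ℝ) * A (mψ n (f + g)) s =
        φ n (s : ℝ) * A (mψ n f) s + φ n (s : ℝ) * A (mψ n g) s := by
      intro n
      rw [hmψadd, map_add]
      have : (↑(A (mψ n f) + A (mψ n g)) : S → ℂ) s = A (mψ n f) s + A (mψ n g) s := by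
        rw [lp.coeFn_add]; rfl
      rw [this, mul_add]
    calc h (f + g) s = ∑' n, (φ n (s : ℝ) * A (mψ n f) s + φ n (s : ℝ) * A (mψ n g) s) :=
          tsum_congr e
      _ = h f s + h g s := Summable.tsum_add (hφG f s) (hφG g s)
  have hhsmul : ∀ (c : ℂ) (f : lp (fun _ : T => ℂ) 2) (s : S),
      h (c • f) s = c * h f s := by
    intro c f s
    have e : ∀ n : ℕ, φ n (s : ℝ) * A (mψ n (c • f)) s =
        c * (φ n (s : ℝ) * A (mψ n f) s) := by
      intro n
      rw [hmψsmul, map_smul]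
      have : (↑(c • A (mψ n f)) : S → ℂ) s = c * A (mψ n f) s := by
        rw [lp.coeFn_smul]; rfl
      rw [this]; ring
    calc h (c • f) s = ∑' n, c * (φ n (s : ℝ) * A (mψ n f) s) := tsum_congr e
      _ = c * h f s := tsum_mul_left
  let L : lp (fun _ : T => ℂ) 2 →ₗ[ℂ] lp (fun _ : S => ℂ) 2 :=
    { toFun := fun f => ⟨h f, hhmem f⟩
      map_add' := fun f g => Subtype.ext (funext fun s => hhadd f g s)
      map_smul' := fun c f => Subtype.ext (funext fun s => hhsmul c f s) }
  have hLapp : ∀ (f : lp (fun _ : T => ℂ) 2) (s : S), (L f) s = h f s := fun _ _ => rfl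
  have hLbound : ∀ f : lp (fun _ : T => ℂ) 2,
      ‖L f‖ ≤ Real.sqrt (C₁ * C₂) * ‖A‖ * ‖f‖ := by
    intro f
    apply lp2_norm_le (L f)
      (by positivity)
    have hc : (Real.sqrt (C₁ * C₂) * ‖A‖ * ‖f‖) ^ 2 = C₁ * C₂ * ‖A‖ ^ 2 * ‖f‖ ^ 2 := by
      rw [mul_pow, mul_pow, Real.sq_sqrt (mul_nonneg hC₁ hC₂)]
    rw [hc]
    refine Summable.tsum_le_of_sum_le ?_ ?_
    · exact summable_of_sum_le (fun s => sq_nonneg _) (hEkey f)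
    · intro K
      refine le_trans (le_of_eq ?_) (hEkey f K)
      exact Finset.sum_congr rfl fun s _ => rfl
  refine ⟨L.mkContinuous (Real.sqrt (C₁ * C₂) * ‖A‖) hLbound, ?_,
    LinearMap.mkContinuous_norm_le L
      (mul_nonneg (Real.sqrt_nonneg _) (norm_nonneg _)) hLbound⟩
  -- Step G : the formula
  intro f s
  show h f s = _
  set F : ℕ → T → ℂ := fun n t => φ n (s : ℝ) * (a s t * (ψ n t * f t)) with hFdef
  have hFnorm : ∀ n t, ‖F n t‖ =
      (‖φ n (s : ℝ)‖ * ‖ψ n (t : ℝ)‖) * (‖a s t‖ * ‖f t‖) := by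
    intro n t
    simp only [hFdef, norm_mul]
    ring
  have h2 : ∀ t : T, Summable fun n => ‖F n t‖ := by
    intro t
    refine ((myCS_summable (fun n => norm_nonneg (φ n (s : ℝ)))
      (fun n => norm_nonneg (ψ n (t : ℝ))) (hφs s) (hψs t)).mul_right
      (‖a s t‖ * ‖f t‖)).congr fun n => (hFnorm n t).symm
  have h2' : ∀ t : T, Summable fun n => F n t := fun t => Summable.of_norm (h2 t)
  have h2bound : ∀ t : T, ∑' n, ‖F n t‖ ≤
      (Real.sqrt C₁ * Real.sqrt C₂) * (‖a s t‖ * ‖f t‖) := by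
    intro t
    have e : ∑' n, ‖F n t‖ =
        (∑' n, ‖φ n (s : ℝ)‖ * ‖ψ n (t : ℝ)‖) * (‖a s t‖ * ‖f t‖) := by
      rw [← tsum_mul_right]
      exact tsum_congr fun n => hFnorm n t
    rw [e]
    refine mul_le_mul_of_nonneg_right ?_ (mul_nonneg (norm_nonneg _) (norm_nonneg _))
    refine (myCS_bound (fun n => norm_nonneg _) (fun n => norm_nonneg _)
      (hφs s) (hψs t)).trans ?_
    exact mul_le_mul (Real.sqrt_le_sqrt (hφ s)) (Real.sqrt_le_sqrt (hψ t))
      (Real.sqrt_nonneg _) (Real.sqrt_nonneg _)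
  have hdom : Summable fun t : T => ‖a s t‖ * ‖f t‖ :=
    myCS_summable (fun t => norm_nonneg _) (fun t => norm_nonneg _)
      (hrowS s) (lp2_summable f)
  have h1' : Summable fun t : T => ∑' n, ‖F n t‖ :=
    Summable.of_nonneg_of_le (fun t => tsum_nonneg fun n => norm_nonneg _)
      h2bound (hdom.mul_left _)
  have hprodnorm : Summable fun p : T × ℕ => ‖F p.2 p.1‖ :=
    (summable_prod_of_nonneg fun p => norm_nonneg _).2 ⟨fun t => h2 t, h1'⟩
  have hprod : Summable fun p : T × ℕ => F p.2 p.1 := Summable.of_norm hprodnorm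
  have huncurry : Summable (Function.uncurry F) := hprod.prod_symm
  have h1 : ∀ n, Summable fun t : T => F n t := fun n => huncurry.prod_factor n
  have hswap : ∑' (t : T), ∑' n, F n t = ∑' n, ∑' (t : T), F n t :=
    Summable.tsum_comm' huncurry h1 h2'
  calc h f s = ∑' n, φ n (s : ℝ) * A (mψ n f) s := rfl
    _ = ∑' n, ∑' t : T, F n t := by
        refine tsum_congr fun n => ?_
        rw [hA (mψ n f) s, ← tsum_mul_left]
    _ = ∑' t : T, ∑' n, F n t := hswap.symm
    _ = ∑' t : T, Φ (s : ℝ) (t : ℝ) * a s t * f t := by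
        refine tsum_congr fun t => ?_
        have e1 : ∀ n, F n t = (φ n (s : ℝ) * ψ n (t : ℝ)) * (a s t * f t) := by
          intro n; simp only [hFdef]; ring
        rw [tsum_congr e1, tsum_mul_right, ← hΦ, mul_assoc]
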